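/- Let f be differentiable on I° with f' integrable on [a,b], a < b, q ≥ 1, and |f'|^q s-convex in the second sense on [a,b] for some s ∈ (0,1]. Then the Simpson-type inequality holds: |(1/6)[f(a) + 4f((a+b)/2) + f(b)] - (1/(b-a))∫ₐᵇ f(x)dx| ≤ ((b-a)/2)(5/36)^{1-1/q} · { ( ((2s+1)3^{s+1}+2)/(3·6^{s+1}(s+1)(s+2)) |f'(b)|^q + (2·5^{s+2}+(s-4)6^{s+1}-(2s+7)3^{s+1})/(3·6^{s+1}(s+1)(s+2)) |f'(a)|^q )^{1/q} + ( (2·5^{s+2}+(s-4)6^{s+1}-(2s+7)3^{s+1})/(3·6^{s+1}(s+1)(s+2)) |f'(b)|^q + ((2s+1)3^{s+1}+2)/(3·6^{s+1}(s+1)(s+2)) |f'(a)|^q )^{1/q} }. -/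

import Mathlib

open MeasureTheory

set_option maxHeartbeats 2000000


lemma weighted_holder {μ : Measure ℝ} {w h : ℝ → ℝ} {q : ℝ} (hq : 1 ≤ q)
    (hw : ∀ x, 0 ≤ w x) (hh : ∀ x, 0 ≤ h x)
    (hwi : Integrable w μ) (hwhq : Integrable (fun x => w x * h x ^ q) μ)
    (hhm : AEStronglyMeasurable h μ) :
    ∫ x, w x * h x ∂μ ≤ (∫ x, w x ∂μ) ^ (1 - 1/q) * (∫ x, w x * h x ^ q ∂μ) ^ (1/q) := by
  rcases eq_or_lt_of_le hq with rfl | hq1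
  · simp
  have hq0 : 0 < q := lt_trans one_pos hq1
  set p := q / (q - 1) with hp
  have hpq : p.HolderConjugate q := (Real.HolderConjugate.conjExponent hq1).symm
  have hp0 : 0 < p := hpq.pos
  set F := fun x => w x ^ (1/p) with hF
  set G := fun x => w x ^ (1/q) * h x with hG
  have hFm : AEStronglyMeasurable F μ :=
    (Real.continuous_rpow_const (by positivity)).comp_aestronglyMeasurable hwi.aestronglyMeasurable
  have hGm : AEStronglyMeasurable G μ :=
    ((Real.continuous_rpow_const (by positivity)).comp_aestronglyMeasurable
      hwi.aestronglyMeasurable).mul hhm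
  have hinv : 1/p + 1/q = 1 := by
    have := hpq.inv_add_inv_eq_one
    simpa [one_div] using this
  have hFp : ∀ x, F x ^ p = w x := by
    intro x
    show (w x ^ (1/p)) ^ p = w x
    rw [← Real.rpow_mul (hw x), one_div_mul_cancel hp0.ne', Real.rpow_one]
  have hGq : ∀ x, G x ^ q = w x * h x ^ q := by
    intro x
    show (w x ^ (1/q) * h x) ^ q = w x * h x ^ q
    rw [Real.mul_rpow (Real.rpow_nonneg (hw x) _) (hh x), ← Real.rpow_mul (hw x),
      one_div_mul_cancel hq0.ne', Real.rpow_one]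
  have hFG : ∀ x, F x * G x = w x * h x := by
    intro x
    show w x ^ (1/p) * (w x ^ (1/q) * h x) = w x * h x
    rw [← mul_assoc, ← Real.rpow_add' (hw x) (by rw [hinv]; norm_num), hinv, Real.rpow_one]
  have hMF : MemLp F (ENNReal.ofReal p) μ := by
    have h1 : Integrable (fun x => ‖F x‖ ^ (ENNReal.ofReal p).toReal) μ := by
      refine hwi.congr (Filter.Eventually.of_forall fun x => ?_)
      show w x = ‖F x‖ ^ (ENNReal.ofReal p).toReal
      rw [ENNReal.toReal_ofReal hp0.le, Real.norm_of_nonneg (Real.rpow_nonneg (hw x) _), hFp x]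
    have := (memLp_norm_rpow_iff (q := ENNReal.ofReal p) (p := ENNReal.ofReal p) hFm
      (by simp [ENNReal.ofReal_eq_zero, not_le, hp0]) (by simp)).mp ?_
    · exact this
    · rw [ENNReal.div_self (by simp [ENNReal.ofReal_eq_zero, not_le, hp0]) (by simp)]
      exact memLp_one_iff_integrable.mpr h1
  have hMG : MemLp G (ENNReal.ofReal q) μ := by
    have h1 : Integrable (fun x => ‖G x‖ ^ (ENNReal.ofReal q).toReal) μ := by
      refine hwhq.congr (Filter.Eventually.of_forall fun x => ?_)
      show w x * h x ^ q = ‖G x‖ ^ (ENNReal.ofReal q).toReal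
      rw [ENNReal.toReal_ofReal hq0.le,
        Real.norm_of_nonneg (mul_nonneg (Real.rpow_nonneg (hw x) _) (hh x)), hGq x]
    have := (memLp_norm_rpow_iff (q := ENNReal.ofReal q) (p := ENNReal.ofReal q) hGm
      (by simp [ENNReal.ofReal_eq_zero, not_le, hq0]) (by simp)).mp ?_
    · exact this
    · rw [ENNReal.div_self (by simp [ENNReal.ofReal_eq_zero, not_le, hq0]) (by simp)]
      exact memLp_one_iff_integrable.mpr h1
  have key := integral_mul_le_Lp_mul_Lq_of_nonneg hpq
    (Filter.Eventually.of_forall fun x => Real.rpow_nonneg (hw x) _)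
    (Filter.Eventually.of_forall fun x => mul_nonneg (Real.rpow_nonneg (hw x) _) (hh x))
    hMF hMG
  calc ∫ x, w x * h x ∂μ = ∫ x, F x * G x ∂μ :=
        integral_congr_ae (Filter.Eventually.of_forall fun x => (hFG x).symm)
    _ ≤ (∫ x, F x ^ p ∂μ) ^ (1/p) * (∫ x, G x ^ q ∂μ) ^ (1/q) := key
    _ = (∫ x, w x ∂μ) ^ (1 - 1/q) * (∫ x, w x * h x ^ q ∂μ) ^ (1/q) := by
        rw [integral_congr_ae (Filter.Eventually.of_forall fun x => hFp x),
          integral_congr_ae (Filter.Eventually.of_forall fun x => hGq x)]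
        congr 2
        linarith

lemma rpow_succ_nonneg {x : ℝ} (hx : 0 ≤ x) (r : ℝ) (hr : 0 < r) :
    x ^ (r + 1) = x * x ^ r := by
  rcases eq_or_lt_of_le hx with rfl | hx0
  · rw [Real.zero_rpow (by positivity), Real.zero_rpow hr.ne', mul_zero]
  · rw [Real.rpow_add hx0, Real.rpow_one, mul_comm]

noncomputable def Phi (s A B α : ℝ) (t : ℝ) : ℝ :=
  A * (α * t^(s+1)/(s+1) - t^(s+2)/(s+2))
    + B * ((1-α) * (1-t)^(s+1)/(s+1) - (1-t)^(s+2)/(s+2))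

lemma integral_kernel (s A B α : ℝ) (hs : 0 < s) (lo hi : ℝ)
    (h0 : 0 ≤ lo) (h1 : hi ≤ 1) (hlh : lo ≤ hi) :
    ∫ t in lo..hi, (α - t) * (t^s*A + (1-t)^s*B) = Phi s A B α hi - Phi s A B α lo := by
  have hs1 : (0:ℝ) < s + 1 := by linarith
  have hs2 : (0:ℝ) < s + 2 := by linarith
  refine intervalIntegral.integral_eq_sub_of_hasDerivAt (fun t ht => ?_) ?_
  · rw [Set.uIcc_of_le hlh] at ht
    have ht0 : 0 ≤ t := le_trans h0 ht.1
    have ht1 : 0 ≤ 1 - t := by have := le_trans ht.2 h1; linarith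
    have d1 : HasDerivAt (fun t : ℝ => t^(s+1)) ((s+1)*t^s) t := by
      have := Real.hasDerivAt_rpow_const (x := t) (p := s+1) (Or.inr (by linarith))
      rwa [show s+1-1 = s by ring] at this
    have d2 : HasDerivAt (fun t : ℝ => t^(s+2)) ((s+2)*t^(s+1)) t := by
      have := Real.hasDerivAt_rpow_const (x := t) (p := s+2) (Or.inr (by linarith))
      rwa [show s+2-1 = s+1 by ring] at this
    have dsub : HasDerivAt (fun t : ℝ => 1 - t) (-1) t := by
      simpa using (hasDerivAt_id t).const_sub 1
    have d3 : HasDerivAt (fun t : ℝ => (1-t)^(s+1)) ((s+1)*(1-t)^s * (-1)) t := by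
      have h := Real.hasDerivAt_rpow_const (x := 1-t) (p := s+1) (Or.inr (by linarith))
      have := h.comp t dsub
      rwa [show s+1-1 = s by ring] at this
    have d4 : HasDerivAt (fun t : ℝ => (1-t)^(s+2)) ((s+2)*(1-t)^(s+1) * (-1)) t := by
      have h := Real.hasDerivAt_rpow_const (x := 1-t) (p := s+2) (Or.inr (by linarith))
      have := h.comp t dsub
      rwa [show s+2-1 = s+1 by ring] at this
    have dPhi : HasDerivAt (Phi s A B α)
        (A * (α * ((s+1)*t^s)/(s+1) - ((s+2)*t^(s+1))/(s+2))
          + B * ((1-α) * ((s+1)*(1-t)^s * (-1))/(s+1) - ((s+2)*(1-t)^(s+1) * (-1))/(s+2))) t := by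
      exact ((((d1.const_mul α).div_const (s+1)).sub (d2.div_const (s+2))).const_mul A).add
        ((((d3.const_mul (1-α)).div_const (s+1)).sub (d4.div_const (s+2))).const_mul B)
    refine dPhi.congr_deriv ?_
    rw [rpow_succ_nonneg ht0 s hs, rpow_succ_nonneg ht1 s hs]
    field_simp
    ring
  · apply Continuous.intervalIntegrable
    exact (continuous_const.sub continuous_id).mul
      (((Real.continuous_rpow_const hs.le).mul continuous_const).add
        (((Real.continuous_rpow_const hs.le).comp (continuous_const.sub continuous_id)).mul
          continuous_const))



lemma Gval (s A B : ℝ) (hs : 0 < s) :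
    ∫ t in (1/2 : ℝ)..1, |5/6 - t| * (t^s*A + (1-t)^s*B)
      = (1/2) * ((2*(5:ℝ)^(s+2)+(s-4)*(6:ℝ)^(s+1)-(2*s+7)*(3:ℝ)^(s+1))
            / (3*(6:ℝ)^(s+1)*(s+1)*(s+2)) * A
          + ((2*s+1)*(3:ℝ)^(s+1)+2)/(3*(6:ℝ)^(s+1)*(s+1)*(s+2)) * B) := by
  have hs1 : (0:ℝ) < s + 1 := by linarith
  have hs2 : (0:ℝ) < s + 2 := by linarith
  have hcont : Continuous fun t : ℝ => |5/6 - t| * (t^s*A + (1-t)^s*B) :=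
    (continuous_const.sub continuous_id).abs.mul
      (((Real.continuous_rpow_const hs.le).mul continuous_const).add
        (((Real.continuous_rpow_const hs.le).comp (continuous_const.sub continuous_id)).mul
          continuous_const))
  have hsplit := intervalIntegral.integral_add_adjacent_intervals
    (a := (1/2:ℝ)) (b := (5/6:ℝ)) (c := (1:ℝ)) (μ := MeasureTheory.volume)
    (f := fun t : ℝ => |5/6 - t| * (t^s*A + (1-t)^s*B))
    (hcont.intervalIntegrable _ _) (hcont.intervalIntegrable _ _)
  have e1 : ∫ t in (1/2:ℝ)..(5/6:ℝ), |5/6 - t| * (t^s*A + (1-t)^s*B)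
      = Phi s A B (5/6) (5/6) - Phi s A B (5/6) (1/2) := by
    rw [← integral_kernel s A B (5/6) hs (1/2) (5/6) (by norm_num) (by norm_num) (by norm_num)]
    apply intervalIntegral.integral_congr
    intro t ht
    rw [Set.uIcc_of_le (by norm_num : (1/2:ℝ) ≤ 5/6)] at ht
    simp only [abs_of_nonneg (by linarith [ht.2] : (0:ℝ) ≤ 5/6 - t)]
  have e2 : ∫ t in (5/6:ℝ)..(1:ℝ), |5/6 - t| * (t^s*A + (1-t)^s*B)
      = -(Phi s A B (5/6) 1 - Phi s A B (5/6) (5/6)) := by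
    rw [← integral_kernel s A B (5/6) hs (5/6) 1 (by norm_num) (by norm_num) (by norm_num),
      ← intervalIntegral.integral_neg]
    apply intervalIntegral.integral_congr
    intro t ht
    rw [Set.uIcc_of_le (by norm_num : (5/6:ℝ) ≤ 1)] at ht
    simp only [abs_of_nonpos (by linarith [ht.1] : (5/6:ℝ) - t ≤ 0)]
    ring
  rw [← hsplit, e1, e2]
  -- now closed-form arithmetic
  set X2 := (2:ℝ)^s with hX2
  set X3 := (3:ℝ)^s with hX3
  set X5 := (5:ℝ)^s with hX5
  have pX2 : 0 < X2 := Real.rpow_pos_of_pos (by norm_num) s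
  have pX3 : 0 < X3 := Real.rpow_pos_of_pos (by norm_num) s
  have pX5 : 0 < X5 := Real.rpow_pos_of_pos (by norm_num) s
  have knows : ∀ x : ℝ, 0 < x → (x^(s+1) = x^s * x ∧ x^(s+2) = x^s * x * x) := by
    intro x hx
    constructor
    · rw [Real.rpow_add hx, Real.rpow_one]
    · rw [show s+2 = s+1+1 by ring, Real.rpow_add hx, Real.rpow_add hx, Real.rpow_one]
  have e6 : (6:ℝ)^s = X2 * X3 := by
    rw [hX2, hX3, ← Real.mul_rpow (by norm_num) (by norm_num)]; norm_num
  have e56 : ((5:ℝ)/6)^s = X5 / (X2*X3) := by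
    rw [Real.div_rpow (by norm_num) (by norm_num), e6]
  have e16 : ((1:ℝ)/6)^s = 1 / (X2*X3) := by
    rw [Real.div_rpow (by norm_num) (by norm_num), Real.one_rpow, e6]
  have e12 : ((1:ℝ)/2)^s = 1 / X2 := by
    rw [Real.div_rpow (by norm_num) (by norm_num), Real.one_rpow]
  simp only [Phi]
  rw [(knows 5 (by norm_num)).2, (knows 6 (by norm_num)).1, (knows 3 (by norm_num)).1,
    show (1:ℝ) - 5/6 = 1/6 by norm_num, show (1:ℝ) - 1/2 = 1/2 by norm_num,
    show (1:ℝ) - 1 = 0 by norm_num,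
    (knows (5/6) (by norm_num)).1, (knows (5/6) (by norm_num)).2,
    (knows (1/6) (by norm_num)).1, (knows (1/6) (by norm_num)).2,
    (knows (1/2) (by norm_num)).1, (knows (1/2) (by norm_num)).2,
    Real.one_rpow, Real.zero_rpow hs1.ne', Real.zero_rpow hs2.ne',
    e56, e16, e12, e6]
  simp only [Real.one_rpow]
  field_simp
  ring

lemma half_est (h : ℝ → ℝ) (a b s q A B : ℝ) (hab : a < b) (hs : 0 < s) (hq : 1 ≤ q)
    (hA : 0 ≤ A) (hB : 0 ≤ B)
    (hm : AEStronglyMeasurable h (volume.restrict (Set.Ioc a ((a+b)/2))))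
    (hbd : ∀ x ∈ Set.Ioc a ((a+b)/2), |h x| ^ q ≤ ((b-x)/(b-a))^s * A + ((x-a)/(b-a))^s * B) :
    ∫ x in Set.Ioc a ((a+b)/2), |x - (5*a+b)/6| * |h x|
      ≤ (b-a)^2/2 * (5/36 : ℝ)^(1-1/q) *
        ((2*(5:ℝ)^(s+2)+(s-4)*(6:ℝ)^(s+1)-(2*s+7)*(3:ℝ)^(s+1))
            / (3*(6:ℝ)^(s+1)*(s+1)*(s+2)) * A
          + ((2*s+1)*(3:ℝ)^(s+1)+2)/(3*(6:ℝ)^(s+1)*(s+1)*(s+2)) * B) ^ (1/q) := by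
  have hq0 : 0 < q := lt_of_lt_of_le one_pos hq
  have hba : 0 < b - a := by linarith
  set m := (a+b)/2 with hmdef
  have ham : a < m := by rw [hmdef]; linarith
  have hmb : m < b := by rw [hmdef]; linarith
  set c1 : ℝ := (5*a+b)/6 with hc1
  have hac1 : a < c1 := by rw [hc1]; linarith
  have hc1m : c1 < m := by rw [hc1, hmdef]; linarith
  set w : ℝ → ℝ := fun x => |x - c1| with hw
  set H : ℝ → ℝ := fun x => |h x| with hH
  set X : ℝ → ℝ := fun x => ((b-x)/(b-a))^s * A + ((x-a)/(b-a))^s * B with hX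
  set T : ℝ := (2*(5:ℝ)^(s+2)+(s-4)*(6:ℝ)^(s+1)-(2*s+7)*(3:ℝ)^(s+1))
            / (3*(6:ℝ)^(s+1)*(s+1)*(s+2)) * A
          + ((2*s+1)*(3:ℝ)^(s+1)+2)/(3*(6:ℝ)^(s+1)*(s+1)*(s+2)) * B with hT
  set G : ℝ → ℝ := fun t => |5/6 - t| * (t^s*A + (1-t)^s*B) with hG
  clear_value T
  have hwcont : Continuous w := (continuous_id.sub continuous_const).abs
  have hGcont : Continuous G :=
    (continuous_const.sub continuous_id).abs.mul
      (((Real.continuous_rpow_const hs.le).mul continuous_const).add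
        (((Real.continuous_rpow_const hs.le).comp (continuous_const.sub continuous_id)).mul
          continuous_const))
  have hXcont : Continuous X := by
    apply Continuous.add
    · exact (((Real.continuous_rpow_const hs.le).comp
        ((continuous_const.sub continuous_id).div_const _)).mul continuous_const)
    · exact (((Real.continuous_rpow_const hs.le).comp
        ((continuous_id.sub continuous_const).div_const _)).mul continuous_const)
  -- the change of variables machine
  have cov : ∀ F : ℝ → ℝ, Continuous F →
      ∫ x in a..m, F ((b-x)/(b-a)) = (b-a) * ∫ t in (1/2:ℝ)..1, F t := by
    intro F hF
    have hc : (-(1/(b-a))) ≠ 0 := by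
      simp only [ne_eq, neg_eq_zero, one_div, inv_eq_zero]; exact hba.ne'
    have key : ∀ x : ℝ, (b-x)/(b-a) = (-(1/(b-a)))*x + b/(b-a) := by
      intro x; field_simp; ring
    calc ∫ x in a..m, F ((b-x)/(b-a))
        = ∫ x in a..m, F ((-(1/(b-a)))*x + b/(b-a)) := by
          apply intervalIntegral.integral_congr; intro x _; simp only [key x]
      _ = (-(1/(b-a)))⁻¹ • ∫ t in ((-(1/(b-a)))*a + b/(b-a))..((-(1/(b-a)))*m + b/(b-a)), F t :=
          intervalIntegral.integral_comp_mul_add F hc _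
      _ = (b-a) * ∫ t in (1/2:ℝ)..1, F t := by
          have e1 : (-(1/(b-a)))*a + b/(b-a) = 1 := by field_simp; ring
          have e2 : (-(1/(b-a)))*m + b/(b-a) = 1/2 := by
            rw [hmdef]; field_simp; ring
          rw [e1, e2, intervalIntegral.integral_symm, smul_eq_mul]
          field_simp
  -- identification of the pointwise kernel
  have kernelEq : ∀ x : ℝ, w x = (b-a) * |5/6 - (b-x)/(b-a)| := by
    intro x
    have : 5/6 - (b-x)/(b-a) = (x - c1)/(b-a) := by rw [hc1]; field_simp; ring
    rw [this, abs_div, abs_of_pos hba, hw]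
    field_simp
  have oneSub : ∀ x : ℝ, 1 - (b-x)/(b-a) = (x-a)/(b-a) := by
    intro x; field_simp; ring
  -- integral of w
  have wval : ∫ x in Set.Ioc a m, w x = (b-a)^2 * (5/72) := by
    rw [← intervalIntegral.integral_of_le ham.le]
    have : ∫ x in a..m, w x = ∫ x in a..m, (fun t => (b-a) * |5/6 - t|) ((b-x)/(b-a)) := by
      apply intervalIntegral.integral_congr; intro x _; exact kernelEq x
    rw [this, cov (fun t => (b-a) * |5/6 - t|)
      (continuous_const.mul (continuous_const.sub continuous_id).abs)]
    have vabs : ∫ t in (1/2:ℝ)..1, (b-a) * |5/6 - t| = (b-a) * (5/72) := by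
      rw [intervalIntegral.integral_const_mul]
      have split := intervalIntegral.integral_add_adjacent_intervals
        (a := (1/2:ℝ)) (b := (5/6:ℝ)) (c := (1:ℝ)) (μ := volume)
        (f := fun t : ℝ => |5/6 - t|)
        ((continuous_const.sub continuous_id).abs.intervalIntegrable _ _)
        ((continuous_const.sub continuous_id).abs.intervalIntegrable _ _)
      have p1 : ∫ t in (1/2:ℝ)..(5/6:ℝ), |5/6 - t| = 1/18 := by
        have : ∫ t in (1/2:ℝ)..(5/6:ℝ), |5/6 - t| = ∫ t in (1/2:ℝ)..(5/6:ℝ), (5/6 - t) := by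
          apply intervalIntegral.integral_congr; intro t ht
          rw [Set.uIcc_of_le (by norm_num : (1/2:ℝ) ≤ 5/6)] at ht
          simp only [abs_of_nonneg (by linarith [ht.2] : (0:ℝ) ≤ 5/6 - t)]
        rw [this, intervalIntegral.integral_sub (intervalIntegrable_const)
          (intervalIntegral.intervalIntegrable_id), intervalIntegral.integral_const,
          integral_id]
        norm_num
      have p2 : ∫ t in (5/6:ℝ)..(1:ℝ), |5/6 - t| = 1/72 := by
        have : ∫ t in (5/6:ℝ)..(1:ℝ), |5/6 - t| = ∫ t in (5/6:ℝ)..(1:ℝ), (t - 5/6) := by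
          apply intervalIntegral.integral_congr; intro t ht
          rw [Set.uIcc_of_le (by norm_num : (5/6:ℝ) ≤ 1)] at ht
          simp only [abs_of_nonpos (by linarith [ht.1] : (5/6:ℝ) - t ≤ 0), neg_sub]
        rw [this, intervalIntegral.integral_sub (intervalIntegral.intervalIntegrable_id)
          (intervalIntegrable_const), intervalIntegral.integral_const,
          integral_id]
        norm_num
      rw [← split, p1, p2]; norm_num
    rw [vabs]; ring
  -- integral of w * X
  have wXval : ∫ x in Set.Ioc a m, w x * X x = (b-a)^2 * ((1/2) * T) := by
    rw [← intervalIntegral.integral_of_le ham.le]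
    have : ∫ x in a..m, w x * X x = ∫ x in a..m, (fun t => (b-a) * G t) ((b-x)/(b-a)) := by
      apply intervalIntegral.integral_congr; intro x _
      show w x * (((b-x)/(b-a))^s*A + ((x-a)/(b-a))^s*B)
        = (b-a) * (|5/6 - (b-x)/(b-a)| * (((b-x)/(b-a))^s*A + (1 - (b-x)/(b-a))^s*B))
      rw [oneSub x, ← mul_assoc, ← kernelEq x]
    rw [this, cov (fun t => (b-a) * G t) (continuous_const.mul hGcont),
      intervalIntegral.integral_const_mul,
      Gval s A B hs, ← hT]
    ring
  -- positivity of T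
  have hTnn : 0 ≤ T := by
    have h1 : 0 ≤ ∫ x in Set.Ioc a m, w x * X x := by
      apply setIntegral_nonneg measurableSet_Ioc
      intro x hx
      apply mul_nonneg (abs_nonneg _)
      have hx1 : 0 ≤ b - x := by have := hx.2; rw [hmdef] at this; linarith
      have hx2 : 0 ≤ x - a := by have := hx.1; linarith
      apply add_nonneg
      · exact mul_nonneg (Real.rpow_nonneg (div_nonneg hx1 hba.le) _) hA
      · exact mul_nonneg (Real.rpow_nonneg (div_nonneg hx2 hba.le) _) hB
    rw [wXval] at h1
    have h2 : 0 ≤ 1/2 * T := by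
      by_contra hh
      push_neg at hh
      have := mul_neg_of_pos_of_neg (pow_pos hba 2) hh
      linarith
    linarith
  -- integrability facts
  have wint : Integrable w (volume.restrict (Set.Ioc a m)) :=
    (hwcont.integrableOn_Ioc (μ := volume))
  have Hm : AEStronglyMeasurable H (volume.restrict (Set.Ioc a m)) :=
    continuous_abs.comp_aestronglyMeasurable hm
  have Hqm : AEStronglyMeasurable (fun x => w x * H x ^ q) (volume.restrict (Set.Ioc a m)) :=
    (hwcont.aestronglyMeasurable).mul
      ((Real.continuous_rpow_const hq0.le).comp_aestronglyMeasurable Hm)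
  have hwle : ∀ x ∈ Set.Ioc a m, w x ≤ b - a := by
    intro x hx
    rw [hw]
    simp only
    rw [abs_le]
    constructor <;> [nlinarith [hx.1, hx.2, hc1m, hac1]; nlinarith [hx.1, hx.2, hc1m, hac1]]
  have hXle : ∀ x ∈ Set.Ioc a m, X x ≤ A + B := by
    intro x hx
    have hx1 : a < x := hx.1
    have hx2 : x ≤ m := hx.2
    have t1 : (0:ℝ) ≤ (b-x)/(b-a) := by
      apply div_nonneg _ hba.le; nlinarith
    have t2 : (b-x)/(b-a) ≤ 1 := by
      rw [div_le_one hba]; nlinarith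
    have t3 : (0:ℝ) ≤ (x-a)/(b-a) := by
      apply div_nonneg _ hba.le; nlinarith
    have t4 : (x-a)/(b-a) ≤ 1 := by
      rw [div_le_one hba]; nlinarith
    rw [hX]
    simp only
    have r1 : ((b-x)/(b-a))^s ≤ 1 := Real.rpow_le_one t1 t2 hs.le
    have r2 : ((x-a)/(b-a))^s ≤ 1 := Real.rpow_le_one t3 t4 hs.le
    nlinarith [mul_le_of_le_one_left hA r1, mul_le_of_le_one_left hB r2]
  have whqint : Integrable (fun x => w x * H x ^ q) (volume.restrict (Set.Ioc a m)) := by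
    apply Integrable.mono' (g := fun _ => (b-a) * (A+B))
      (integrableOn_const measure_Ioc_lt_top.ne) Hqm
    filter_upwards [ae_restrict_mem measurableSet_Ioc] with x hx
    rw [Real.norm_of_nonneg (mul_nonneg (abs_nonneg _) (Real.rpow_nonneg (abs_nonneg _) _))]
    have h1 : H x ^ q ≤ X x := hbd x hx
    have h2 : X x ≤ A + B := hXle x hx
    have h3 : (0:ℝ) ≤ H x ^ q := Real.rpow_nonneg (abs_nonneg _) _
    have h4 := hwle x hx
    have h5 : (0:ℝ) ≤ w x := abs_nonneg _
    nlinarith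
  have wXint : Integrable (fun x => w x * X x) (volume.restrict (Set.Ioc a m)) :=
    ((hwcont.mul hXcont).integrableOn_Ioc (μ := volume))
  -- monotone step
  have mono1 : ∫ x in Set.Ioc a m, w x * H x ^ q ≤ ∫ x in Set.Ioc a m, w x * X x := by
    apply setIntegral_mono_on whqint wXint measurableSet_Ioc
    intro x hx
    exact mul_le_mul_of_nonneg_left (hbd x hx) (abs_nonneg _)
  have hwHq_nn : 0 ≤ ∫ x in Set.Ioc a m, w x * H x ^ q := by
    apply integral_nonneg
    intro x
    exact mul_nonneg (abs_nonneg _) (Real.rpow_nonneg (abs_nonneg _) _)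
  -- Hölder
  have holder := weighted_holder (μ := volume.restrict (Set.Ioc a m)) hq
    (fun x => abs_nonneg _) (fun x => abs_nonneg _) wint whqint Hm
  -- final chain
  have exp_nn : (0:ℝ) ≤ 1 - 1/q := by
    have : 1/q ≤ 1 := by rw [div_le_one hq0]; exact hq
    linarith
  have exp2_nn : (0:ℝ) ≤ 1/q := by positivity
  calc ∫ x in Set.Ioc a m, w x * H x
      ≤ (∫ x in Set.Ioc a m, w x) ^ (1-1/q) * (∫ x in Set.Ioc a m, w x * H x ^ q) ^ (1/q) :=
        holder
    _ ≤ ((b-a)^2 * (5/72)) ^ (1-1/q) * ((b-a)^2 * ((1/2) * T)) ^ (1/q) := by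
        rw [wval]
        apply mul_le_mul_of_nonneg_left _ (Real.rpow_nonneg (by positivity) _)
        apply Real.rpow_le_rpow hwHq_nn _ exp2_nn
        rw [← wXval]; exact mono1
    _ = (b-a)^2/2 * (5/36:ℝ)^(1-1/q) * T ^ (1/q) := by
        have c0 : (0:ℝ) < (b-a)^2/2 := by positivity
        have e1 : (b-a)^2 * (5/72) = ((b-a)^2/2) * (5/36) := by ring
        have e2 : (b-a)^2 * ((1/2) * T) = ((b-a)^2/2) * T := by ring
        rw [e1, e2, Real.mul_rpow c0.le (by norm_num), Real.mul_rpow c0.le hTnn]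
        have e3 : ((b-a)^2/2) ^ (1-1/q) * ((b-a)^2/2) ^ (1/q) = (b-a)^2/2 := by
          rw [← Real.rpow_add c0]
          norm_num
        calc ((b-a)^2/2) ^ (1-1/q) * (5/36:ℝ)^(1-1/q) * (((b-a)^2/2) ^ (1/q) * T ^ (1/q))
            = (((b-a)^2/2) ^ (1-1/q) * ((b-a)^2/2) ^ (1/q)) * ((5/36:ℝ)^(1-1/q) * T ^ (1/q)) := by
              ring
          _ = (b-a)^2/2 * (5/36:ℝ)^(1-1/q) * T ^ (1/q) := by rw [e3]; ring

theorem stmt_4 (I : Set ℝ) (f f' : ℝ → ℝ) (a b s q : ℝ)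
    (hab : a < b) (hI0 : I ⊆ Set.Ici (0:ℝ)) (hI : Set.Icc a b ⊆ interior I)
    (hs : s ∈ Set.Ioc (0:ℝ) 1) (hq : 1 ≤ q)
    (hder : ∀ x ∈ interior I, HasDerivAt f (f' x) x)
    (hint : IntervalIntegrable f' volume a b)
    (hconv : ∀ x ∈ Set.Icc a b, ∀ y ∈ Set.Icc a b, ∀ t ∈ Set.Icc (0:ℝ) 1,
      |f' (t * x + (1 - t) * y)| ^ q ≤ t ^ s * |f' x| ^ q + (1 - t) ^ s * |f' y| ^ q) :
    |(1/6) * (f a + 4 * f ((a + b)/2) + f b) - (1 / (b - a)) * ∫ x in a..b, f x|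
      ≤ ((b - a)/2) * (5/36 : ℝ) ^ (1 - 1/q) *
        ((((2*s+1) * (3:ℝ)^(s+1) + 2) / (3 * (6:ℝ)^(s+1) * (s+1) * (s+2)) * |f' b| ^ q
            + (2 * (5:ℝ)^(s+2) + (s-4) * (6:ℝ)^(s+1) - (2*s+7) * (3:ℝ)^(s+1))
              / (3 * (6:ℝ)^(s+1) * (s+1) * (s+2)) * |f' a| ^ q) ^ (1/q)
          + ((2 * (5:ℝ)^(s+2) + (s-4) * (6:ℝ)^(s+1) - (2*s+7) * (3:ℝ)^(s+1))
              / (3 * (6:ℝ)^(s+1) * (s+1) * (s+2)) * |f' b| ^ q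
            + ((2*s+1) * (3:ℝ)^(s+1) + 2) / (3 * (6:ℝ)^(s+1) * (s+1) * (s+2))
              * |f' a| ^ q) ^ (1/q)) := by
  obtain ⟨hs0, hs1⟩ := hs
  have hq0 : 0 < q := lt_of_lt_of_le one_pos hq
  have hba : 0 < b - a := sub_pos.mpr hab
  set m : ℝ := (a+b)/2 with hmdef
  have ham : a < m := by rw [hmdef]; linarith
  have hmb : m < b := by rw [hmdef]; linarith
  have hsub1 : Set.uIcc a m ⊆ Set.Icc a b := by
    rw [Set.uIcc_of_le ham.le]; exact Set.Icc_subset_Icc le_rfl hmb.le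
  have hsub2 : Set.uIcc m b ⊆ Set.Icc a b := by
    rw [Set.uIcc_of_le hmb.le]; exact Set.Icc_subset_Icc ham.le le_rfl
  have huab : Set.uIcc a m ⊆ Set.uIcc a b := by
    rw [Set.uIcc_of_le hab.le]; exact hsub1
  have huab2 : Set.uIcc m b ⊆ Set.uIcc a b := by
    rw [Set.uIcc_of_le hab.le]; exact hsub2
  have hmem : ∀ x ∈ Set.Icc a b, HasDerivAt f (f' x) x := fun x hx => hder x (hI hx)
  have hint1 : IntervalIntegrable f' volume a m := hint.mono_set huab
  have hint2 : IntervalIntegrable f' volume m b := hint.mono_set huab2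
  have hfc : ContinuousOn f (Set.Icc a b) := fun x hx =>
    ((hder x (hI hx)).continuousAt).continuousWithinAt
  have hf1 : IntervalIntegrable f volume a m := (hfc.mono hsub1).intervalIntegrable
  have hf2 : IntervalIntegrable f volume m b := (hfc.mono hsub2).intervalIntegrable
  -- integration by parts
  have ibp1 := intervalIntegral.integral_mul_deriv_eq_deriv_mul
    (u := fun x => x - (5*a+b)/6) (u' := fun _ => (1:ℝ)) (v := f) (v' := f')
    (fun x _ => (hasDerivAt_id x).sub_const _) (fun x hx => hmem x (hsub1 hx))
    intervalIntegrable_const hint1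
  have ibp2 := intervalIntegral.integral_mul_deriv_eq_deriv_mul
    (u := fun x => x - (a+5*b)/6) (u' := fun _ => (1:ℝ)) (v := f) (v' := f')
    (fun x _ => (hasDerivAt_id x).sub_const _) (fun x hx => hmem x (hsub2 hx))
    intervalIntegrable_const hint2
  simp only [one_mul] at ibp1 ibp2
  have hsplitf : ∫ x in a..b, f x = (∫ x in a..m, f x) + ∫ x in m..b, f x :=
    (intervalIntegral.integral_add_adjacent_intervals hf1 hf2).symm
  set E1 : ℝ := ∫ x in a..m, (x - (5*a+b)/6) * f' x with hE1
  set E2 : ℝ := ∫ x in m..b, (x - (a+5*b)/6) * f' x with hE2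
  have identity : (1/6) * (f a + 4 * f m + f b) - (1 / (b - a)) * ∫ x in a..b, f x
      = (E1 + E2)/(b-a) := by
    rw [hsplitf, ibp1, ibp2, hmdef]
    field_simp
    ring
  rw [identity]
  -- bounds on |E1| and |E2| by set integrals
  have b1 : |E1| ≤ ∫ x in Set.Ioc a m, |x - (5*a+b)/6| * |f' x| := by
    refine le_trans (intervalIntegral.abs_integral_le_integral_abs ham.le) ?_
    rw [intervalIntegral.integral_of_le ham.le]
    apply le_of_eq
    apply integral_congr_ae (Filter.Eventually.of_forall fun x => ?_)
    rw [abs_mul]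
  have b2 : |E2| ≤ ∫ x in Set.Ioc m b, |x - (a+5*b)/6| * |f' x| := by
    refine le_trans (intervalIntegral.abs_integral_le_integral_abs hmb.le) ?_
    rw [intervalIntegral.integral_of_le hmb.le]
    apply le_of_eq
    apply integral_congr_ae (Filter.Eventually.of_forall fun x => ?_)
    rw [abs_mul]
  -- reflection for the second piece
  have refl2 : ∫ x in Set.Ioc m b, |x - (a+5*b)/6| * |f' x|
      = ∫ y in Set.Ioc a m, |y - (5*a+b)/6| * |f' (a+b-y)| := by
    rw [← intervalIntegral.integral_of_le hmb.le, ← intervalIntegral.integral_of_le ham.le]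
    have cs := intervalIntegral.integral_comp_sub_left
      (a := a) (b := m) (fun x => |x - (a+5*b)/6| * |f' x|) (a+b)
    have e1 : a + b - m = m := by rw [hmdef]; ring
    have e2 : a + b - a = b := by ring
    rw [e1, e2] at cs
    rw [← cs]
    apply intervalIntegral.integral_congr
    intro y _
    have : a + b - y - (a+5*b)/6 = -(y - (5*a+b)/6) := by ring
    simp only [this, abs_neg]
  -- measurability inputs
  have hm1 : AEStronglyMeasurable f' (volume.restrict (Set.Ioc a m)) :=
    hint1.1.aestronglyMeasurable
  have hfd : ∀ x ∈ Set.Icc a b, f' x = deriv f x := fun x hx => ((hder x (hI hx)).deriv).symm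
  have hm2 : AEStronglyMeasurable (fun y => f' (a+b-y)) (volume.restrict (Set.Ioc a m)) := by
    apply AEStronglyMeasurable.congr
      (((measurable_deriv f).comp (measurable_const.sub measurable_id)).aestronglyMeasurable)
    filter_upwards [ae_restrict_mem measurableSet_Ioc] with y hy
    have hmem' : a + b - y ∈ Set.Icc a b := by
      have hym : y ≤ (a+b)/2 := hmdef ▸ hy.2
      constructor
      · linarith
      · linarith [hy.1]
    exact (hfd _ hmem').symm
  -- convexity bounds
  have haI : a ∈ Set.Icc a b := ⟨le_rfl, hab.le⟩
  have hbI : b ∈ Set.Icc a b := ⟨hab.le, le_rfl⟩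
  have bd1 : ∀ x ∈ Set.Ioc a m, |f' x| ^ q
      ≤ ((b-x)/(b-a))^s * |f' a|^q + ((x-a)/(b-a))^s * |f' b|^q := by
    intro x hx
    have hx1 : a < x := hx.1
    have hx2 : x ≤ m := hx.2
    have hxb : x < b := lt_of_le_of_lt hx2 hmb
    set t : ℝ := (b-x)/(b-a) with ht
    have ht0 : 0 ≤ t := by apply div_nonneg _ hba.le; linarith
    have ht1 : t ≤ 1 := by rw [ht, div_le_one hba]; linarith
    have hx' : t * a + (1 - t) * b = x := by rw [ht]; field_simp; ring
    have h1t : 1 - t = (x-a)/(b-a) := by rw [ht]; field_simp; ring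
    have := hconv a haI b hbI t ⟨ht0, ht1⟩
    rw [hx', h1t] at this
    exact this
  have bd2 : ∀ y ∈ Set.Ioc a m, |(fun y => f' (a+b-y)) y| ^ q
      ≤ ((b-y)/(b-a))^s * |f' b|^q + ((y-a)/(b-a))^s * |f' a|^q := by
    intro y hy
    show |f' (a+b-y)| ^ q ≤ ((b-y)/(b-a))^s * |f' b|^q + ((y-a)/(b-a))^s * |f' a|^q
    have hy1 : a < y := hy.1
    have hy2 : y ≤ m := hy.2
    set t : ℝ := (b-y)/(b-a) with ht
    have ht0 : 0 ≤ t := by apply div_nonneg _ hba.le; linarith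
    have ht1 : t ≤ 1 := by rw [ht, div_le_one hba]; linarith
    have hx' : t * b + (1 - t) * a = a + b - y := by rw [ht]; field_simp; ring
    have h1t : 1 - t = (y-a)/(b-a) := by rw [ht]; field_simp; ring
    have := hconv b hbI a haI t ⟨ht0, ht1⟩
    rw [hx', h1t] at this
    exact this
  have hAnn : 0 ≤ |f' a|^q := Real.rpow_nonneg (abs_nonneg _) _
  have hBnn : 0 ≤ |f' b|^q := Real.rpow_nonneg (abs_nonneg _) _
  have est1 := half_est f' a b s q (|f' a|^q) (|f' b|^q) hab hs0 hq hAnn hBnn hm1 bd1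
  have est2 := half_est (fun y => f' (a+b-y)) a b s q (|f' b|^q) (|f' a|^q) hab hs0 hq
    hBnn hAnn hm2 bd2
  -- put everything together
  set C1 : ℝ := ((2*s+1) * (3:ℝ)^(s+1) + 2) / (3 * (6:ℝ)^(s+1) * (s+1) * (s+2)) with hC1
  set C2 : ℝ := (2 * (5:ℝ)^(s+2) + (s-4) * (6:ℝ)^(s+1) - (2*s+7) * (3:ℝ)^(s+1))
      / (3 * (6:ℝ)^(s+1) * (s+1) * (s+2)) with hC2
  have comm1 : C1 * |f' b| ^ q + C2 * |f' a| ^ q = C2 * |f' a| ^ q + C1 * |f' b| ^ q := add_comm _ _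
  have comm2 : C2 * |f' b| ^ q + C1 * |f' a| ^ q = C2 * |f' b| ^ q + C1 * |f' a| ^ q := rfl
  have key1 : |E1| ≤ (b-a)^2/2 * (5/36 : ℝ)^(1-1/q)
      * (C2 * |f' a| ^ q + C1 * |f' b| ^ q) ^ (1/q) := le_trans b1 est1
  have key2 : |E2| ≤ (b-a)^2/2 * (5/36 : ℝ)^(1-1/q)
      * (C2 * |f' b| ^ q + C1 * |f' a| ^ q) ^ (1/q) := by
    rw [refl2] at b2
    exact le_trans b2 est2
  calc |(E1 + E2)/(b-a)| = |E1 + E2|/(b-a) := by rw [abs_div, abs_of_pos hba]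
    _ ≤ (|E1| + |E2|)/(b-a) := by gcongr; exact abs_add_le _ _
    _ ≤ ((b-a)^2/2 * (5/36 : ℝ)^(1-1/q) * (C2 * |f' a| ^ q + C1 * |f' b| ^ q) ^ (1/q)
          + (b-a)^2/2 * (5/36 : ℝ)^(1-1/q) * (C2 * |f' b| ^ q + C1 * |f' a| ^ q) ^ (1/q))
        / (b-a) := by gcongr
    _ = ((b - a)/2) * (5/36 : ℝ) ^ (1 - 1/q) *
        ((C1 * |f' b| ^ q + C2 * |f' a| ^ q) ^ (1/q)
          + (C2 * |f' b| ^ q + C1 * |f' a| ^ q) ^ (1/q)) := by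
        rw [comm1]
        field_simp
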